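/- Let μ = (uA, vB) and ν = (u′A, v′B) be standard Weyl pairs on ℂ^N, and define P = X_μ^{-1}⊗Id + Y_μ⊗Y_ν^{-1} and Q = q^{-1}·Y_μ⊗X_ν^{-1}Y_ν^{-1} in End(ℂ^N ⊗ ℂ^N). Then: (a) P commutes with X_μ⊗X_ν and with X_μ^{-1}⊗Y_ν + Y_μ⊗Id; (b) Q commutes with X_μ⊗X_ν and with X_μ^{-1}⊗Y_ν + Y_μ⊗Id; (c) QP = q^2·PQ; (d) Q is invertible, and if (μ, ν) is regular (i.e. x_μ^{-1}·y_ν + y_μ ≠ 0 where x_μ = u^N, y_μ = v^N, y_ν = v′^N), then P is invertible. -/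
import Mathlib


open TensorProduct

noncomputable section

/-- ℂ^N: functions from ℤ/Nℤ to ℂ. -/
abbrev CN (N : ℕ) := ZMod N → ℂ

/-- The operator A with A e_k = q^{2k} e_k. -/
def opA (q : ℂ) (N : ℕ) : Module.End ℂ (CN N) where
  toFun f := fun k => q ^ (2 * k.val) * f k
  map_add' f g := by funext k; simp [mul_add]
  map_smul' c f := by funext k; simp [smul_eq_mul]; ring

/-- The operator B with B e_k = e_{k+1}. -/
def opB (N : ℕ) : Module.End ℂ (CN N) where
  toFun f := fun k => f (k - 1)
  map_add' f g := by funext k; simp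
  map_smul' c f := by funext k; simp

/-- The operator C with C e_k = q^{1-2k} e_{k-1}, i.e. (C f)(k) = q^{-1-2k} f(k+1). -/
def opC (q : ℂ) (N : ℕ) : Module.End ℂ (CN N) where
  toFun f := fun k => q ^ (-1 - 2 * (k.val : ℤ)) * f (k + 1)
  map_add' f g := by funext k; simp [mul_add]
  map_smul' c f := by funext k; simp [smul_eq_mul]; ring

/-- A Weyl pair: invertible endomorphisms with X Y = q² Y X. -/
def IsWeylPair (q : ℂ) {V : Type*} [AddCommMonoid V] [Module ℂ V]
    (X Y : Module.End ℂ V) : Prop :=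
  IsUnit X ∧ IsUnit Y ∧ X * Y = q ^ 2 • (Y * X)

/-- A subspace invariant under both X and Y. -/
def WeylInvariant {V : Type*} [AddCommMonoid V] [Module ℂ V]
    (X Y : Module.End ℂ V) (W : Submodule ℂ V) : Prop :=
  (∀ v ∈ W, X v ∈ W) ∧ (∀ v ∈ W, Y v ∈ W)

/-- An irreducible Weyl pair. -/
def IsIrreducibleWeylPair (q : ℂ) {V : Type*} [AddCommMonoid V] [Module ℂ V]
    (X Y : Module.End ℂ V) : Prop :=
  IsWeylPair q X Y ∧ Nontrivial V ∧
    ∀ W : Submodule ℂ V, WeylInvariant X Y W → W = ⊥ ∨ W = ⊤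
section WeylAux

open Finset

variable {R' : Type*} [Ring R'] [Algebra ℂ R'] {x y : R'} {c : ℂ}

lemma weyl_pow (h : x * y = c • (y * x)) (n : ℕ) : x * y ^ n = c ^ n • (y ^ n * x) := by
  induction n with
  | zero => simp
  | succ n ih =>
    rw [pow_succ', ← mul_assoc, h, smul_mul_assoc, mul_assoc, ih, mul_smul_comm, smul_smul,
      ← mul_assoc, ← pow_succ', pow_succ' c n]

lemma weyl_mul_pow (h : x * y = c • (y * x)) (n : ℕ) :
    (x * y) ^ n = c ^ (∑ i ∈ range n, (i + 1)) • (y ^ n * x ^ n) := by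
  induction n with
  | zero => simp
  | succ n ih =>
    rw [pow_succ' (x*y) n, ih, mul_smul_comm]
    have h1 : (x * y) * (y ^ n * x ^ n) = (x * y ^ (n+1)) * x ^ n := by
      rw [pow_succ']; noncomm_ring
    rw [h1, weyl_pow h (n+1), smul_mul_assoc, smul_smul, mul_assoc, ← pow_succ',
      Finset.sum_range_succ, pow_add]
    congr 1
    ring

lemma winv_left (hc : c ≠ 0) (hX : IsUnit x) (h : x * y = c • (y * x)) :
    Ring.inverse x * y = c⁻¹ • (y * Ring.inverse x) := by
  have h1 : y * Ring.inverse x = c • (Ring.inverse x * y) := by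
    have h2 : Ring.inverse x * (x * y) * Ring.inverse x
        = Ring.inverse x * (c • (y * x)) * Ring.inverse x := by rw [h]
    simp only [mul_smul_comm, smul_mul_assoc, ← mul_assoc] at h2
    rw [Ring.inverse_mul_cancel x hX, one_mul,
      mul_assoc (Ring.inverse x * y) x (Ring.inverse x),
      Ring.mul_inverse_cancel x hX, mul_one] at h2
    exact h2
  rw [h1, smul_smul, inv_mul_cancel₀ hc, one_smul]

lemma winv_right (hc : c ≠ 0) (hY : IsUnit y) (h : x * y = c • (y * x)) :
    x * Ring.inverse y = c⁻¹ • (Ring.inverse y * x) := by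
  have h1 : Ring.inverse y * x = c • (x * Ring.inverse y) := by
    have h2 : Ring.inverse y * (x * y) * Ring.inverse y
        = Ring.inverse y * (c • (y * x)) * Ring.inverse y := by rw [h]
    simp only [mul_smul_comm, smul_mul_assoc, ← mul_assoc] at h2
    rw [mul_assoc (Ring.inverse y * x) y (Ring.inverse y),
      Ring.mul_inverse_cancel y hY, mul_one] at h2
    rw [h2, Ring.inverse_mul_cancel y hY, one_mul]
  rw [h1, smul_smul, inv_mul_cancel₀ hc, one_smul]

lemma winv_both (hc : c ≠ 0) (hX : IsUnit x) (hY : IsUnit y) (h : x * y = c • (y * x)) :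
    Ring.inverse x * Ring.inverse y = c • (Ring.inverse y * Ring.inverse x) := by
  have h2 := winv_left (inv_ne_zero hc) hX (winv_right hc hY h)
  rwa [inv_inv] at h2

lemma isUnit_smul_of_isUnit (hc : c ≠ 0) (hx : IsUnit x) : IsUnit (c • x) := by
  obtain ⟨z, hz1, hz2⟩ := isUnit_iff_exists.mp hx
  exact isUnit_iff_exists.mpr ⟨c⁻¹ • z, by
    rw [smul_mul_assoc, mul_smul_comm, smul_smul, hz1, mul_inv_cancel₀ hc, one_smul], by
    rw [smul_mul_assoc, mul_smul_comm, smul_smul, hz2, inv_mul_cancel₀ hc, one_smul]⟩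

lemma inverse_smul_one (hc : c ≠ 0) : Ring.inverse (c • (1 : R')) = c⁻¹ • 1 := by
  have : Ring.inverse ((⟨c • 1, c⁻¹ • 1,
      by rw [smul_mul_assoc, mul_smul_comm, smul_smul, one_mul, mul_inv_cancel₀ hc, one_smul],
      by rw [smul_mul_assoc, mul_smul_comm, smul_smul, one_mul, inv_mul_cancel₀ hc, one_smul]⟩ :
        R'ˣ) : R') = _ := Ring.inverse_unit _
  exact this

lemma isUnit_one_add_of_pow (T : R') (NN : ℕ) (s : ℂ) (hT : T ^ NN = s • 1)
    (hs : (1 : ℂ) - (-1) ^ NN * s ≠ 0) : IsUnit (1 + T) := by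
  set G : R' := ∑ i ∈ range NN, (-T) ^ i with hG
  have hTN : (-T) ^ NN = ((-1 : ℂ) ^ NN * s) • 1 := by
    rw [neg_pow, hT]
    have h1 : ((-1 : R')) ^ NN = ((-1 : ℂ) ^ NN) • 1 := by
      rw [show ((-1 : R')) = ((-1 : ℂ)) • 1 by simp, smul_pow, one_pow]
    rw [h1, smul_mul_assoc, one_mul, smul_smul]
  have h1 : G * (1 + T) = (1 - (-1 : ℂ) ^ NN * s) • 1 := by
    have h0 := geom_sum_mul (-T) NN
    rw [hTN] at h0
    have h2 : G * (1 + T) = -(G * (-T - 1)) := by noncomm_ring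
    rw [h2, h0, sub_smul, one_smul]
    abel
  have h2 : (1 + T) * G = (1 - (-1 : ℂ) ^ NN * s) • 1 := by
    have h0 := mul_geom_sum (-T) NN
    rw [hTN] at h0
    have h3 : (1 + T) * G = -((-T - 1) * G) := by noncomm_ring
    rw [h3, h0, sub_smul, one_smul]
    abel
  refine isUnit_iff_exists.mpr ⟨(1 - (-1 : ℂ) ^ NN * s)⁻¹ • G, ?_, ?_⟩
  · rw [mul_smul_comm, h2, smul_smul, inv_mul_cancel₀ hs, one_smul]
  · rw [smul_mul_assoc, h1, smul_smul, inv_mul_cancel₀ hs, one_smul]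

lemma opA_apply (q : ℂ) (N : ℕ) (f : CN N) (k : ZMod N) :
    opA q N f k = (q ^ 2) ^ k.val * f k := by
  show q ^ (2 * k.val) * f k = _
  rw [pow_mul]

lemma opB_apply (N : ℕ) (f : CN N) (k : ZMod N) : opB N f k = f (k - 1) := rfl

variable {N : ℕ} (hN : 1 ≤ N) {q : ℂ} (hq : IsPrimitiveRoot (q ^ 2) N)
include hN hq

set_option linter.unusedSectionVars false

lemma aux_q_ne : q ≠ 0 := by
  intro h0
  have := hq.pow_eq_one
  rw [h0] at this
  simp [zero_pow (by omega : N ≠ 0)] at this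

lemma aux_pow_congr {a b : ℕ} (h : a ≡ b [MOD N]) : (q ^ 2) ^ a = (q ^ 2) ^ b := by
  have hord := hq.eq_orderOf
  calc (q ^ 2) ^ a = (q ^ 2) ^ (a % orderOf (q ^ 2)) := (pow_mod_orderOf _ _).symm
    _ = (q ^ 2) ^ (b % orderOf (q ^ 2)) := by rw [← hord]; exact congrArg _ h
    _ = (q ^ 2) ^ b := pow_mod_orderOf _ _

lemma opAB_rel : opA q N * opB N = q ^ 2 • (opB N * opA q N) := by
  haveI : NeZero N := ⟨by omega⟩
  refine LinearMap.ext fun f => funext fun k => ?_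
  show opA q N (opB N f) k = q ^ 2 • (opB N (opA q N f)) k
  rw [opA_apply, opB_apply]
  show _ = q ^ 2 * (opA q N f (k - 1))
  rw [opA_apply]
  have hmod : k.val ≡ (k - 1).val + 1 [MOD N] := by
    rw [← ZMod.natCast_eq_natCast_iff]
    push_cast
    rw [ZMod.natCast_val, ZMod.natCast_val, ZMod.cast_id, ZMod.cast_id]
    ring
  rw [aux_pow_congr hN hq hmod, pow_succ]
  ring

lemma opA_pow_apply (n : ℕ) (f : CN N) (k : ZMod N) :
    (opA q N ^ n) f k = ((q ^ 2) ^ k.val) ^ n * f k := by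
  induction n generalizing f with
  | zero => simp
  | succ n ih =>
    rw [pow_succ, Module.End.mul_apply, ih, opA_apply, pow_succ]
    ring

lemma opB_pow_apply (n : ℕ) (f : CN N) (k : ZMod N) :
    (opB N ^ n) f k = f (k - n) := by
  induction n generalizing f k with
  | zero => simp
  | succ n ih =>
    rw [pow_succ, Module.End.mul_apply, ih, opB_apply]
    push_cast
    ring_nf

lemma opA_pow_N : opA q N ^ N = 1 := by
  refine LinearMap.ext fun f => funext fun k => ?_
  show (opA q N ^ N) f k = f k
  rw [opA_pow_apply hN hq, pow_right_comm, hq.pow_eq_one, one_pow, one_mul]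

lemma opB_pow_N : opB N ^ N = 1 := by
  refine LinearMap.ext fun f => funext fun k => ?_
  show (opB N ^ N) f k = f k
  rw [opB_pow_apply hN hq, ZMod.natCast_self, sub_zero]

lemma isUnit_opA : IsUnit (opA q N) := by
  refine isUnit_iff_exists.mpr ⟨opA q N ^ (N - 1), ?_, ?_⟩
  · rw [← pow_succ', Nat.sub_add_cancel hN, opA_pow_N hN hq]
  · rw [← pow_succ, Nat.sub_add_cancel hN, opA_pow_N hN hq]

lemma isUnit_opB : IsUnit (opB N) := by
  refine isUnit_iff_exists.mpr ⟨opB N ^ (N - 1), ?_, ?_⟩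
  · rw [← pow_succ', Nat.sub_add_cancel hN, opB_pow_N hN hq]
  · rw [← pow_succ, Nat.sub_add_cancel hN, opB_pow_N hN hq]

lemma aux_eps : (q ^ 2) ^ (∑ i ∈ range N, (i + 1)) = (-1 : ℂ) ^ (N - 1) := by
  have h2d : 2 * (∑ i ∈ range N, (i + 1)) = N * (N + 1) := by
    have h0 := Finset.sum_range_id_mul_two N
    have hsum : (∑ i ∈ range N, (i + 1)) = (∑ i ∈ range N, i) + N := by
      rw [Finset.sum_add_distrib]; simp
    rcases Nat.exists_eq_add_of_le hN with ⟨m, rfl⟩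
    rw [show (1 + m) - 1 = m from by omega] at h0
    have hr : (1 + m) * (1 + m + 1) = (1 + m) * m + 2 * (1 + m) := by ring
    linarith
  rcases Nat.even_or_odd N with he | ho
  · obtain ⟨k, hk⟩ := he
    have hk1 : 1 ≤ k := by omega
    have hd : (∑ i ∈ range N, (i + 1)) = k * (N + 1) := by
      refine Nat.eq_of_mul_eq_mul_left (by norm_num : 0 < 2) ?_
      rw [h2d, hk]; ring
    have hck : (q ^ 2) ^ k = -1 := by
      have hsq : (q ^ 2) ^ k * (q ^ 2) ^ k = 1 := by
        rw [← pow_add, show k + k = N by omega, hq.pow_eq_one]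
      rcases mul_self_eq_one_iff.mp hsq with h1 | h1
      · exact absurd h1 (hq.pow_ne_one_of_pos_of_lt (by omega) (by omega))
      · exact h1
    rw [hd, pow_mul, hck, show N + 1 = (N - 1) + 2 from by omega, pow_add]
    norm_num
  · obtain ⟨k, hk⟩ := ho
    have hd : (∑ i ∈ range N, (i + 1)) = N * (k + 1) := by
      refine Nat.eq_of_mul_eq_mul_left (by norm_num : 0 < 2) ?_
      rw [h2d, hk]; ring
    rw [hd, pow_mul, hq.pow_eq_one, one_pow, show N - 1 = 2 * k from by omega, pow_mul]
    norm_num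

end WeylAux

/-- for standard Weyl pairs μ, ν, the operators
P = X_μ⁻¹⊗Id + Y_μ⊗Y_ν⁻¹ and Q = q⁻¹·Y_μ⊗X_ν⁻¹Y_ν⁻¹ commute with X_μ⊗X_ν and
with X_μ⁻¹⊗Y_ν + Y_μ⊗Id, satisfy QP = q²PQ, Q is invertible, and P is
invertible whenever (μ, ν) is regular. -/
theorem stmt16 (N : ℕ) (hN : 1 ≤ N) (q : ℂ) (hq : IsPrimitiveRoot (q ^ 2) N)
    (u v u' v' : ℂ) (hu : u ≠ 0) (hv : v ≠ 0) (hu' : u' ≠ 0) (hv' : v' ≠ 0) :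
    let Xμ : Module.End ℂ (CN N) := u • opA q N
    let Yμ : Module.End ℂ (CN N) := v • opB N
    let Xν : Module.End ℂ (CN N) := u' • opA q N
    let Yν : Module.End ℂ (CN N) := v' • opB N
    let P : Module.End ℂ (CN N ⊗[ℂ] CN N) :=
      TensorProduct.map (Ring.inverse Xμ) 1 + TensorProduct.map Yμ (Ring.inverse Yν)
    let Q : Module.End ℂ (CN N ⊗[ℂ] CN N) :=
      q⁻¹ • TensorProduct.map Yμ (Ring.inverse Xν * Ring.inverse Yν)
    let 𝕏 : Module.End ℂ (CN N ⊗[ℂ] CN N) := TensorProduct.map Xμ Xν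
    let 𝕐 : Module.End ℂ (CN N ⊗[ℂ] CN N) :=
      TensorProduct.map (Ring.inverse Xμ) Yν + TensorProduct.map Yμ 1
    (P * 𝕏 = 𝕏 * P ∧ P * 𝕐 = 𝕐 * P) ∧
    (Q * 𝕏 = 𝕏 * Q ∧ Q * 𝕐 = 𝕐 * Q) ∧
    Q * P = q ^ 2 • (P * Q) ∧
    IsUnit Q ∧ ((u ^ N)⁻¹ * v' ^ N + v ^ N ≠ 0 → IsUnit P) := by
  intro Xμ Yμ Xν Yν P Q 𝕏 𝕐
  haveI : NeZero N := ⟨by omega⟩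
  have hq0 : q ≠ 0 := aux_q_ne hN hq
  have hc0 : q ^ 2 ≠ 0 := pow_ne_zero 2 hq0
  have hA := isUnit_opA hN hq
  have hB := isUnit_opB hN hq
  have hXμu : IsUnit Xμ := isUnit_smul_of_isUnit hu hA
  have hYμu : IsUnit Yμ := isUnit_smul_of_isUnit hv hB
  have hXνu : IsUnit Xν := isUnit_smul_of_isUnit hu' hA
  have hYνu : IsUnit Yν := isUnit_smul_of_isUnit hv' hB
  have hrel : ∀ α β : ℂ, (α • opA q N) * (β • opB N) = q ^ 2 • ((β • opB N) * (α • opA q N)) := by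
    intro α β
    simp only [smul_mul_assoc, mul_smul_comm, smul_smul, opAB_rel hN hq]
    congr 1; ring
  have hXYμ : Xμ * Yμ = q ^ 2 • (Yμ * Xμ) := hrel u v
  have hXYν : Xν * Yν = q ^ 2 • (Yν * Xν) := hrel u' v'
  have e1 : Ring.inverse Xμ * Xμ = 1 := Ring.inverse_mul_cancel _ hXμu
  have e2 : Xμ * Ring.inverse Xμ = 1 := Ring.mul_inverse_cancel _ hXμu
  have e3 : Ring.inverse Yν * Yν = 1 := Ring.inverse_mul_cancel _ hYνu
  have e4 : Yν * Ring.inverse Yν = 1 := Ring.mul_inverse_cancel _ hYνu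
  have e5 : Xν * Ring.inverse Xν = 1 := Ring.mul_inverse_cancel _ hXνu
  have e6 : Ring.inverse Xν * Xν = 1 := Ring.inverse_mul_cancel _ hXνu
  have r1 : Xν * Ring.inverse Yν = (q ^ 2)⁻¹ • (Ring.inverse Yν * Xν) := winv_right hc0 hYνu hXYν
  have r2 : Ring.inverse Xμ * Yμ = (q ^ 2)⁻¹ • (Yμ * Ring.inverse Xμ) := winv_left hc0 hXμu hXYμ
  have r5 : Ring.inverse Yν * Xν = q ^ 2 • (Xν * Ring.inverse Yν) := by
    rw [r1, smul_smul, mul_inv_cancel₀ hc0, one_smul]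
  have r4 : Yν * Ring.inverse Xν = q ^ 2 • (Ring.inverse Xν * Yν) := by
    rw [winv_left hc0 hXνu hXYν, smul_smul, mul_inv_cancel₀ hc0, one_smul]
  have r6 : Ring.inverse Yν * Ring.inverse Xν
      = (q ^ 2)⁻¹ • (Ring.inverse Xν * Ring.inverse Yν) := by
    rw [winv_both hc0 hXνu hYνu hXYν, smul_smul, inv_mul_cancel₀ hc0, one_smul]
  refine ⟨⟨?_, ?_⟩, ⟨?_, ?_⟩, ?_, ?_, ?_⟩
  · -- P * 𝕏 = 𝕏 * P
    have L : P * 𝕏 = TensorProduct.map 1 Xν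
        + q ^ 2 • TensorProduct.map (Yμ * Xμ) (Xν * Ring.inverse Yν) := by
      simp only [P, 𝕏, add_mul, ← TensorProduct.map_mul, e1, one_mul, r5,
        TensorProduct.map_smul_right]
    have Rr : 𝕏 * P = TensorProduct.map 1 Xν
        + q ^ 2 • TensorProduct.map (Yμ * Xμ) (Xν * Ring.inverse Yν) := by
      simp only [P, 𝕏, mul_add, ← TensorProduct.map_mul, e2, mul_one, one_mul, hXYμ,
        TensorProduct.map_smul_left]
    rw [L, Rr]
  · -- P * 𝕐 = 𝕐 * P
    simp only [P, 𝕐, add_mul, mul_add, ← TensorProduct.map_mul, e3, e4, one_mul, mul_one]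
    try abel
  · -- Q * 𝕏 = 𝕏 * Q
    have hx1 : (Ring.inverse Xν * Ring.inverse Yν) * Xν = q ^ 2 • Ring.inverse Yν := by
      rw [mul_assoc, r5, mul_smul_comm, ← mul_assoc, e6, one_mul]
    have hx2 : Xν * (Ring.inverse Xν * Ring.inverse Yν) = Ring.inverse Yν := by
      rw [← mul_assoc, e5, one_mul]
    have L : Q * 𝕏 = q⁻¹ • (q ^ 2 • TensorProduct.map (Yμ * Xμ) (Ring.inverse Yν)) := by
      simp only [Q, 𝕏, smul_mul_assoc, ← TensorProduct.map_mul, hx1,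
        TensorProduct.map_smul_right]
    have Rr : 𝕏 * Q = q⁻¹ • (q ^ 2 • TensorProduct.map (Yμ * Xμ) (Ring.inverse Yν)) := by
      simp only [Q, 𝕏, mul_smul_comm, ← TensorProduct.map_mul, hx2, hXYμ,
        TensorProduct.map_smul_left]
    rw [L, Rr]
  · -- Q * 𝕐 = 𝕐 * Q
    have hy1 : (Ring.inverse Xν * Ring.inverse Yν) * Yν = Ring.inverse Xν := by
      rw [mul_assoc, e3, mul_one]
    have hy2 : Yν * (Ring.inverse Xν * Ring.inverse Yν) = q ^ 2 • Ring.inverse Xν := by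
      rw [← mul_assoc, r4, smul_mul_assoc, mul_assoc, e4, mul_one]
    have L : Q * 𝕐 = q⁻¹ • (TensorProduct.map (Yμ * Ring.inverse Xμ) (Ring.inverse Xν)
        + TensorProduct.map (Yμ * Yμ) (Ring.inverse Xν * Ring.inverse Yν)) := by
      simp only [Q, 𝕐, smul_mul_assoc, mul_add, ← TensorProduct.map_mul, hy1, mul_one,
        smul_add]
    have Rr : 𝕐 * Q = q⁻¹ • (TensorProduct.map (Yμ * Ring.inverse Xμ) (Ring.inverse Xν)
        + TensorProduct.map (Yμ * Yμ) (Ring.inverse Xν * Ring.inverse Yν)) := by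
      simp only [Q, 𝕐, mul_smul_comm, add_mul, ← TensorProduct.map_mul, hy2, r2, one_mul,
        TensorProduct.map_smul_left, TensorProduct.map_smul_right, smul_smul, smul_add,
        inv_mul_cancel₀ hc0, mul_inv_cancel₀ hc0, mul_one, one_smul]
    rw [L, Rr]
  · -- Q * P = q ^ 2 • (P * Q)
    have hz : Ring.inverse Yν * (Ring.inverse Xν * Ring.inverse Yν)
        = (q ^ 2)⁻¹ • ((Ring.inverse Xν * Ring.inverse Yν) * Ring.inverse Yν) := by
      rw [← mul_assoc, r6, smul_mul_assoc]
    have L : Q * P = q⁻¹ • (TensorProduct.map (Yμ * Ring.inverse Xμ)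
          (Ring.inverse Xν * Ring.inverse Yν)
        + TensorProduct.map (Yμ * Yμ) ((Ring.inverse Xν * Ring.inverse Yν) * Ring.inverse Yν)) := by
      simp only [Q, P, smul_mul_assoc, mul_add, ← TensorProduct.map_mul, mul_one, smul_add]
    have Rr : P * Q = (q⁻¹ * (q ^ 2)⁻¹) • (TensorProduct.map (Yμ * Ring.inverse Xμ)
          (Ring.inverse Xν * Ring.inverse Yν)
        + TensorProduct.map (Yμ * Yμ) ((Ring.inverse Xν * Ring.inverse Yν) * Ring.inverse Yν)) := by
      simp only [P, Q, mul_smul_comm, add_mul, ← TensorProduct.map_mul, one_mul, r2, hz,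
        TensorProduct.map_smul_left, TensorProduct.map_smul_right, smul_add, smul_smul]
    rw [L, Rr, smul_smul]
    congr 1
    field_simp
  · -- IsUnit Q
    have hiXν : IsUnit (Ring.inverse Xν) :=
      isUnit_iff_exists.mpr ⟨Xν, Ring.inverse_mul_cancel _ hXνu, Ring.mul_inverse_cancel _ hXνu⟩
    have hiYν : IsUnit (Ring.inverse Yν) :=
      isUnit_iff_exists.mpr ⟨Yν, Ring.inverse_mul_cancel _ hYνu, Ring.mul_inverse_cancel _ hYνu⟩
    have hmap : IsUnit (TensorProduct.map Yμ (Ring.inverse Xν * Ring.inverse Yν)) := by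
      obtain ⟨z, hz1, hz2⟩ := isUnit_iff_exists.mp hYμu
      obtain ⟨w, hw1, hw2⟩ := isUnit_iff_exists.mp (hiXν.mul hiYν)
      exact isUnit_iff_exists.mpr ⟨TensorProduct.map z w,
        by rw [← TensorProduct.map_mul, hz1, hw1, TensorProduct.map_one],
        by rw [← TensorProduct.map_mul, hz2, hw2, TensorProduct.map_one]⟩
    simp only [Q]
    exact isUnit_smul_of_isUnit (R' := Module.End ℂ (CN N ⊗[ℂ] CN N)) (inv_ne_zero hq0) hmap
  · -- regular → IsUnit P
    intro hreg
    set T : Module.End ℂ (CN N ⊗[ℂ] CN N) :=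
      TensorProduct.map (Xμ * Yμ) (Ring.inverse Yν) with hT
    have hfact : P = TensorProduct.map (Ring.inverse Xμ) 1 * (1 + T) := by
      simp only [P, hT, mul_add, mul_one, ← TensorProduct.map_mul, ← mul_assoc, e1, one_mul]
    have hmapu : IsUnit (TensorProduct.map (Ring.inverse Xμ) (1 : Module.End ℂ (CN N))) :=
      isUnit_iff_exists.mpr ⟨TensorProduct.map Xμ 1,
        by rw [← TensorProduct.map_mul, e1, one_mul, TensorProduct.map_one],
        by rw [← TensorProduct.map_mul, e2, one_mul, TensorProduct.map_one]⟩
    have hXYμN : (Xμ * Yμ) ^ N = ((u * v) ^ N * (-1 : ℂ) ^ (N - 1)) • 1 := by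
      have h1 : Xμ * Yμ = (u * v) • (opA q N * opB N) := by
        simp only [Xμ, Yμ]; rw [smul_mul_assoc, mul_smul_comm, smul_smul]
      rw [h1, smul_pow, weyl_mul_pow (opAB_rel hN hq) N, opA_pow_N hN hq, opB_pow_N hN hq,
        one_mul, aux_eps hN hq, smul_smul]
    have hYνN : Ring.inverse Yν ^ N = ((v' ^ N)⁻¹ : ℂ) • 1 := by
      have h1 : Yν ^ N = (v' ^ N : ℂ) • 1 := by
        simp only [Yν]; rw [smul_pow, opB_pow_N hN hq]
      rw [Ring.inverse_pow, h1, inverse_smul_one (pow_ne_zero _ hv')]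
    have hTN : T ^ N = (((u * v) ^ N * (-1 : ℂ) ^ (N - 1)) * (v' ^ N)⁻¹) • 1 := by
      rw [hT, TensorProduct.map_pow, hXYμN, hYνN, TensorProduct.map_smul_left,
        TensorProduct.map_smul_right, TensorProduct.map_one, smul_smul]
    have hmm : ((-1 : ℂ)) ^ N * (-1) ^ (N - 1) = -1 := by
      have h1 : ((-1 : ℂ)) ^ N = (-1) ^ (N - 1) * (-1) := by
        conv_lhs => rw [show N = (N - 1) + 1 from by omega]
        rw [pow_succ]
      have h2 : ((-1 : ℂ)) ^ (N - 1) * (-1) ^ (N - 1) = 1 := by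
        rw [← pow_add, ← two_mul, pow_mul]; norm_num
      calc ((-1 : ℂ)) ^ N * (-1) ^ (N - 1) = ((-1 : ℂ) ^ (N - 1) * (-1 : ℂ) ^ (N - 1)) * (-1) := by
            rw [h1]; ring
        _ = -1 := by rw [h2]; ring
    have hs : (1 : ℂ) - (-1) ^ N * (((u * v) ^ N * (-1 : ℂ) ^ (N - 1)) * (v' ^ N)⁻¹) ≠ 0 := by
      have hkey : (1 : ℂ) - (-1) ^ N * (((u * v) ^ N * (-1 : ℂ) ^ (N - 1)) * (v' ^ N)⁻¹)
          = 1 + (u * v) ^ N * (v' ^ N)⁻¹ := by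
        linear_combination (-((u * v) ^ N * (v' ^ N)⁻¹)) * hmm
      rw [hkey]
      intro h0
      apply hreg
      have hW : v' ^ N ≠ 0 := pow_ne_zero _ hv'
      have hU : u ^ N ≠ 0 := pow_ne_zero _ hu
      field_simp at h0 ⊢
      rw [mul_pow] at h0
      linear_combination h0
    rw [hfact]
    exact hmapu.mul (isUnit_one_add_of_pow T N _ hTN hs)


end
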